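/- Let q1, q2, r1, r2, s1, s2 > 0 with q1 ≥ q2, r1 ≥ r2, s1 ≥ s2. Define Q1 = (1+1/q1)(1+1/r1)(1+1/s1), Q2 = (1+1/q2)(1+1/r2)(1+1/s2), Q1' = (1+1/q1)(1+1/r2)(1+1/s1), Q2' = (1+1/q2)(1+1/r1)(1+1/s2). Then (1 + 1/(Q1−1))·(1 + 1/(Q2−1)) ≥ (1 + 1/(Q1'−1))·(1 + 1/(Q2'−1)). -/

import Mathlib

lemma key_pair (A B u v : ℝ) (hA : 1 < A) (hB : 1 < B) (hu : 1 < u) (hv : 1 < v)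
    (hAB : A ≤ B) (huv : u ≤ v) :
    (1 + 1 / (A * u - 1)) * (1 + 1 / (B * v - 1)) ≥
    (1 + 1 / (A * v - 1)) * (1 + 1 / (B * u - 1)) := by
  have h1 : 0 < A * u - 1 := by nlinarith
  have h2 : 0 < B * v - 1 := by nlinarith
  have h3 : 0 < A * v - 1 := by nlinarith
  have h4 : 0 < B * u - 1 := by nlinarith
  have f : ∀ x : ℝ, x - 1 ≠ 0 → 1 + 1 / (x - 1) = x / (x - 1) := by
    intro x hx; field_simp; ring
  rw [ge_iff_le, f _ h1.ne', f _ h2.ne', f _ h3.ne', f _ h4.ne',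
    div_mul_div_comm, div_mul_div_comm,
    div_le_div_iff₀ (by positivity) (by positivity)]
  nlinarith [mul_nonneg (mul_nonneg (mul_pos (mul_pos (lt_trans one_pos hA)
    (lt_trans one_pos hB)) (mul_pos (lt_trans one_pos hu) (lt_trans one_pos hv))).le
    (sub_nonneg.2 hAB)) (sub_nonneg.2 huv)]

theorem stmt_1 (q1 q2 r1 r2 s1 s2 : ℝ)
    (hq1 : 0 < q1) (hq2 : 0 < q2) (hr1 : 0 < r1) (hr2 : 0 < r2)
    (hs1 : 0 < s1) (hs2 : 0 < s2)
    (hq : q1 ≥ q2) (hr : r1 ≥ r2) (hs : s1 ≥ s2) :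
    (1 + 1 / ((1 + 1/q1) * (1 + 1/r1) * (1 + 1/s1) - 1)) *
      (1 + 1 / ((1 + 1/q2) * (1 + 1/r2) * (1 + 1/s2) - 1)) ≥
    (1 + 1 / ((1 + 1/q1) * (1 + 1/r2) * (1 + 1/s1) - 1)) *
      (1 + 1 / ((1 + 1/q2) * (1 + 1/r1) * (1 + 1/s2) - 1)) := by
  have e1 : (1 + 1/q1) * (1 + 1/r1) * (1 + 1/s1)
      = ((1 + 1/q1) * (1 + 1/s1)) * (1 + 1/r1) := by ring
  have e2 : (1 + 1/q2) * (1 + 1/r2) * (1 + 1/s2)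
      = ((1 + 1/q2) * (1 + 1/s2)) * (1 + 1/r2) := by ring
  have e3 : (1 + 1/q1) * (1 + 1/r2) * (1 + 1/s1)
      = ((1 + 1/q1) * (1 + 1/s1)) * (1 + 1/r2) := by ring
  have e4 : (1 + 1/q2) * (1 + 1/r1) * (1 + 1/s2)
      = ((1 + 1/q2) * (1 + 1/s2)) * (1 + 1/r1) := by ring
  rw [e1, e2, e3, e4]
  apply key_pair
  · nlinarith [one_div_pos.2 hq1, one_div_pos.2 hs1]
  · nlinarith [one_div_pos.2 hq2, one_div_pos.2 hs2]
  · nlinarith [one_div_pos.2 hr1]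
  · nlinarith [one_div_pos.2 hr2]
  · have hq' : 1/q1 ≤ 1/q2 := one_div_le_one_div_of_le hq2 hq
    have hs' : 1/s1 ≤ 1/s2 := one_div_le_one_div_of_le hs2 hs
    nlinarith [one_div_pos.2 hq1, one_div_pos.2 hs1]
  · have := one_div_le_one_div_of_le hr2 hr
    linarith
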